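/- The polynomial x^7 - 2x^4 - 2x^3 + 1 has a real root λ with 1.465 < λ < 1.466, and this root satisfies λ > 1 and strictly dominates all other complex roots of the polynomial in absolute value. -/

import Mathlib

set_option maxHeartbeats 1000000

theorem keylem (lam : ℝ) (h1 : 1.465 < lam) (h2 : lam < 1.466)
    (hroot : lam ^ 7 - 2 * lam ^ 4 - 2 * lam ^ 3 + 1 = 0)
    (z : ℂ) (hz : z ^ 7 - 2 * z ^ 4 - 2 * z ^ 3 + 1 = 0) (hne : z ≠ (lam : ℂ)) :
    ‖z‖ < lam := by
  have hlam1 : (1:ℝ) < lam := by linarith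
  have hlam0 : (0:ℝ) < lam := by linarith
  have hlamne : (lam:ℝ) ≠ 0 := ne_of_gt hlam0
  have hq_lam : lam^6 - lam^5 + lam^4 - 3*lam^3 + lam^2 - lam + 1 = 0 := by
    have h : (lam + 1) * (lam^6 - lam^5 + lam^4 - 3*lam^3 + lam^2 - lam + 1) = 0 := by
      linear_combination hroot
    exact (mul_eq_zero.mp h).resolve_left (by linarith)
  set w0 : ℝ := lam + lam⁻¹ with hw0def
  have hinv_lam : lam * lam⁻¹ = 1 := mul_inv_cancel₀ hlamne
  have hw0cubic : w0^3 - w0^2 - 2*w0 - 1 = 0 := by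
    have h : lam^3 * (w0^3 - w0^2 - 2*w0 - 1)
        = lam^6 - lam^5 + lam^4 - 3*lam^3 + lam^2 - lam + 1 := by
      rw [hw0def]; field_simp; ring
    have h2 : lam^3 * (w0^3 - w0^2 - 2*w0 - 1) = 0 := by rw [h, hq_lam]
    exact (mul_eq_zero.mp h2).resolve_left (pow_ne_zero _ hlamne)
  have hinvlo : (1:ℝ)/1.466 < lam⁻¹ := by
    rw [one_div]; exact inv_strictAnti₀ hlam0 h2
  have hinvhi : lam⁻¹ < 1/1.465 := by
    rw [one_div]; exact inv_strictAnti₀ (by norm_num) h1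
  have hw0lo : (2.147:ℝ) < w0 := by rw [hw0def]; nlinarith
  have hw0hi : w0 < 2.1486 := by rw [hw0def]; nlinarith
  have hw0pos : (0:ℝ) < w0 := lt_trans (by norm_num) hw0lo
  have hw0ne : w0 ≠ 0 := ne_of_gt hw0pos
  by_cases hzm1 : z = -1
  · rw [hzm1]; simpa using hlam1
  have hqz : z^6 - z^5 + z^4 - 3*z^3 + z^2 - z + 1 = 0 := by
    have h : (z + 1) * (z^6 - z^5 + z^4 - 3*z^3 + z^2 - z + 1) = 0 := by
      linear_combination hz
    refine (mul_eq_zero.mp h).resolve_left fun h' => hzm1 (by linear_combination h')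
  have hzne : z ≠ 0 := by
    intro h0; rw [h0] at hqz; norm_num at hqz
  set w : ℂ := z + z⁻¹ with hwdef
  have hinv_z : z * z⁻¹ = 1 := mul_inv_cancel₀ hzne
  have hwcubic : w^3 - w^2 - 2*w - 1 = 0 := by
    have h : z^3 * (w^3 - w^2 - 2*w - 1)
        = z^6 - z^5 + z^4 - 3*z^3 + z^2 - z + 1 := by
      rw [hwdef]; field_simp; ring
    have h2 : z^3 * (w^3 - w^2 - 2*w - 1) = 0 := by rw [h, hqz]
    exact (mul_eq_zero.mp h2).resolve_left (pow_ne_zero _ hzne)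
  have hW0cubic : (w0:ℂ)^3 - (w0:ℂ)^2 - 2*(w0:ℂ) - 1 = 0 := by exact_mod_cast hw0cubic
  have hW0ne : (w0:ℂ) ≠ 0 := by exact_mod_cast hw0ne
  have hm : (w0:ℂ) * ((w0:ℂ)^2 - (w0:ℂ) - 2) = 1 := by linear_combination hW0cubic
  have hinvW0 : ((w0:ℂ))⁻¹ = (w0:ℂ)^2 - (w0:ℂ) - 2 := inv_eq_of_mul_eq_one_right hm
  have hfac : (w - w0) * (w^2 + ((w0:ℂ)-1)*w + ((w0:ℂ))⁻¹) = 0 := by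
    rw [hinvW0]
    linear_combination hwcubic - hW0cubic
  rcases mul_eq_zero.mp hfac with hcase | hcase
  · -- w = w0 : z = lam⁻¹
    have hweq : w = (w0:ℂ) := by linear_combination hcase
    have hquad : z^2 - (w0:ℂ)*z + 1 = 0 := by
      have h : z * (w - (w0:ℂ)) = z^2 - (w0:ℂ)*z + 1 := by
        rw [hwdef]; field_simp; ring
      rw [hweq] at h
      linear_combination -h
    have hli : (lam:ℂ) * ((lam:ℂ))⁻¹ = 1 := mul_inv_cancel₀ (by exact_mod_cast hlamne)
    have hw0c : (w0:ℂ) = (lam:ℂ) + ((lam:ℂ))⁻¹ := by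
      rw [hw0def]; push_cast; ring
    have hfac2 : (z - (lam:ℂ)) * (z - ((lam:ℂ))⁻¹) = 0 := by
      rw [hw0c] at hquad
      linear_combination hquad + hli
    have hz2 : z = ((lam:ℂ))⁻¹ := by
      rcases mul_eq_zero.mp hfac2 with h | h
      · exact absurd (by linear_combination h) hne
      · linear_combination h
    rw [hz2, norm_inv, Complex.norm_real, Real.norm_eq_abs, abs_of_pos hlam0]
    calc lam⁻¹ < 1 := by rw [inv_lt_one_iff₀]; right; exact hlam1
    _ < lam := hlam1
  · -- quadratic case
    set b : ℝ := w0 - 1 with hbdef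
    set d : ℝ := w0⁻¹ - b^2/4 with hddef
    have hw0inv_lo : (0.46541:ℝ) < w0⁻¹ := by
      calc (0.46541:ℝ) < (2.1486:ℝ)⁻¹ := by norm_num
      _ < w0⁻¹ := inv_strictAnti₀ hw0pos hw0hi
    have hw0inv_hi : w0⁻¹ < 0.46577 := by
      calc w0⁻¹ < (2.147:ℝ)⁻¹ := inv_strictAnti₀ (by norm_num) hw0lo
      _ < 0.46577 := by norm_num
    have hdpos : 0 < d := by rw [hddef, hbdef]; nlinarith
    have hupure : (w + (b:ℂ)/2)^2 = -(d:ℂ) := by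
      have hc' : w ^ 2 + ((w0:ℂ) - 1) * w + ((w0⁻¹:ℝ):ℂ) = 0 := by
        rw [Complex.ofReal_inv]; exact hcase
      push_cast [hddef, hbdef]
      push_cast [hbdef] at hc'
      linear_combination hc'
    set s : ℝ := Real.sqrt d with hsdef
    have hs2 : s^2 = d := Real.sq_sqrt hdpos.le
    have hs2C : ((s:ℂ))^2 = (d:ℂ) := by exact_mod_cast hs2
    have hsq : ((s:ℂ)*Complex.I)^2 = -(d:ℂ) := by
      rw [mul_pow, Complex.I_sq, hs2C]; ring
    have hufac : ((w + (b:ℂ)/2) - (s:ℂ)*Complex.I) * ((w + (b:ℂ)/2) + (s:ℂ)*Complex.I) = 0 := by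
      linear_combination hupure - hsq
    have habs_w : ‖w‖ = Real.sqrt (w0⁻¹) := by
      have hb2d : (-(b/2))^2 + s^2 = w0⁻¹ := by rw [hs2, hddef]; ring
      rcases mul_eq_zero.mp hufac with h | h
      · have hw_eq : w = ↑(-(b/2)) + ↑s * Complex.I := by
          push_cast; linear_combination h
        rw [hw_eq, Complex.norm_add_mul_I, hb2d]
      · have hw_eq : w = ↑(-(b/2)) + ↑(-s) * Complex.I := by
          push_cast; linear_combination h
        rw [hw_eq, Complex.norm_add_mul_I,
          show (-(b/2))^2 + (-s)^2 = w0⁻¹ by rw [← hb2d]; ring]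
    have habs_w_lt : ‖w‖ < 0.6825 := by
      rw [habs_w, show (0.6825:ℝ) = Real.sqrt (0.6825^2) from (Real.sqrt_sq (by norm_num)).symm]
      exact Real.sqrt_lt_sqrt (by positivity) (by nlinarith)
    by_contra habs
    push_neg at habs
    have hr : lam ≤ ‖z‖ := habs
    have hrinv : ‖z‖⁻¹ ≤ lam⁻¹ := inv_anti₀ hlam0 hr
    have htri : ‖z‖ - ‖z‖⁻¹ ≤ ‖w‖ := by
      have h1' : ‖z‖ ≤ ‖w‖ + ‖z⁻¹‖ := by
        have hwz : w - z⁻¹ = z := by rw [hwdef]; ring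
        calc ‖z‖ = ‖w - z⁻¹‖ := by rw [hwz]
        _ ≤ ‖w‖ + ‖z⁻¹‖ := by
            simpa using norm_sub_le w z⁻¹
      rw [norm_inv] at h1'
      linarith
    have hbig : (0.7824:ℝ) < ‖w‖ := by
      have h3 : lam - lam⁻¹ ≤ ‖z‖ - ‖z‖⁻¹ := by linarith
      nlinarith
    linarith

theorem stmt13 :
    ∃ lam : ℝ, 1.465 < lam ∧ lam < 1.466 ∧ 1 < lam ∧
      lam ^ 7 - 2 * lam ^ 4 - 2 * lam ^ 3 + 1 = 0 ∧
      ∀ z : ℂ, z ^ 7 - 2 * z ^ 4 - 2 * z ^ 3 + 1 = 0 → z ≠ (lam : ℂ) →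
        ‖z‖ < lam := by
  obtain ⟨lam, ⟨h1, h2⟩, hroot⟩ :
      ∃ lam ∈ Set.Ioo (1.465:ℝ) 1.466, lam ^ 7 - 2 * lam ^ 4 - 2 * lam ^ 3 + 1 = 0 := by
    have hc : ContinuousOn (fun x : ℝ => x ^ 7 - 2 * x ^ 4 - 2 * x ^ 3 + 1)
        (Set.Icc 1.465 1.466) := by fun_prop
    have h := intermediate_value_Ioo (by norm_num : (1.465:ℝ) ≤ 1.466) hc
    have h0 : (0:ℝ) ∈ Set.Ioo ((1.465:ℝ)^7 - 2*1.465^4 - 2*1.465^3 + 1)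
        ((1.466:ℝ)^7 - 2*1.466^4 - 2*1.466^3 + 1) := by constructor <;> norm_num
    obtain ⟨lam, hmem, heq⟩ := h h0
    exact ⟨lam, hmem, heq⟩
  refine ⟨lam, h1, h2, by linarith, hroot, fun z hz hne => keylem lam h1 h2 hroot z hz hne⟩
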